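/- Let N ≥ 1, h ∈ ℝ, and V(φ) = (1/(2N)) Σ_{i,j=1}^N (1 − cos(φ_i − φ_j)) − h Σ_{i=1}^N cos φ_i. For v ∈ ℝ define the sublevel set M_v = { φ ∈ ℝ^N : V(φ)/N ≤ v }. Then for every v ≥ 1/2 + h²/2, the sublevel set M_v equals all of ℝ^N (equivalently, it equals the entire configuration torus). -/

import Mathlib

/-- For the mean-field XY potential
`V(φ) = (1/(2N)) Σᵢⱼ (1 − cos(φᵢ − φⱼ)) − h Σᵢ cos φᵢ` and any
`v ≥ 1/2 + h²/2`, the sublevel set `M_v = {φ : V(φ)/N ≤ v}` is the whole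
configuration space `ℝ^N`. -/
theorem xy_sublevel_eq_univ (N : ℕ) (hN : 1 ≤ N) (h v : ℝ) (hv : 1 / 2 + h ^ 2 / 2 ≤ v) :
    {φ : Fin N → ℝ |
        ((1 / (2 * (N : ℝ))) * ∑ i, ∑ j, (1 - Real.cos (φ i - φ j))
            - h * ∑ i, Real.cos (φ i)) / (N : ℝ) ≤ v}
      = Set.univ := by
  ext φ
  simp only [Set.mem_setOf_eq, Set.mem_univ, iff_true]
  set n : ℝ := (N : ℝ) with hn
  have hnpos : (0 : ℝ) < n := by
    have : (1 : ℝ) ≤ n := by rw [hn]; exact_mod_cast hN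
    linarith
  set C : ℝ := ∑ i, Real.cos (φ i) with hC
  set S : ℝ := ∑ i, Real.sin (φ i) with hS
  have key : ∑ i, ∑ j, (1 - Real.cos (φ i - φ j)) = n ^ 2 - (C ^ 2 + S ^ 2) := by
    have h1 : ∀ i, ∑ j, (1 - Real.cos (φ i - φ j))
        = n - (Real.cos (φ i) * C + Real.sin (φ i) * S) := by
      intro i
      rw [Finset.sum_sub_distrib]
      simp only [Real.cos_sub, Finset.sum_add_distrib, ← Finset.mul_sum,
        Finset.sum_const, Finset.card_univ, Fintype.card_fin, nsmul_eq_mul, mul_one]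
      rfl
    rw [Finset.sum_congr rfl fun i _ => h1 i, Finset.sum_sub_distrib,
      Finset.sum_add_distrib, ← Finset.sum_mul, ← Finset.sum_mul, ← hC, ← hS]
    simp [Finset.sum_const, hn]
    ring
  rw [key]
  have hkey : ((1 / (2 * n)) * (n ^ 2 - (C ^ 2 + S ^ 2)) - h * C) / n ≤ 1 / 2 + h ^ 2 / 2 := by
    rw [div_le_iff₀ hnpos]
    have hne : (2 * n) ≠ 0 := by positivity
    field_simp
    nlinarith [sq_nonneg (C + h * n), sq_nonneg S]
  linarith
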